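/- Optimal partial collaterals: in the single-enterprise model with players indexed so that x_1 ≥ x_2 ≥ … ≥ x_n, fix any optimal solution of the collateral minimization problem and let A be the set of players receiving full collateral in that solution, X_A = Σ_{i∈A} x_i, and B = [n]∖A. Then there exists an optimal solution in which the players in A receive full collaterals and every player i ∈ B receives collateral c_i = max(0, x_i[1 − (1+α)(1 − Z/(X_A + Σ_{j≤i, j∈B} x_j))]). -/

import Mathlib

open scoped BigOperators Classical

/-- The single-enterprise (star) model: one enterprise with operational cost
`Z ≥ 0` and interest rate `α > 0`, and `n` potential investors, where investor
`i` may invest the amount `x i > 0`.  The enterprise is profitable: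
`(1 + α) * (∑ x - Z) ≥ ∑ x`. -/
structure StarGame (n : ℕ) where
  x : Fin n → ℝ
  Z : ℝ
  α : ℝ
  x_pos : ∀ i, 0 < x i
  Z_nonneg : 0 ≤ Z
  α_pos : 0 < α
  profitable : (∑ i, x i) ≤ (1 + α) * ((∑ i, x i) - Z)

namespace StarGame

variable {n : ℕ}

/-- The enterprise return to a cooperating investor `i` when `S` is the set of
cooperators: `R_i = max (0, (1+α)(∑_{j∈S} x_j − Z) · x_i / ∑_{j∈S} x_j)`
(in particular it is `0` if the enterprise defaults,
i.e. if `∑_{j∈S} x_j < Z`). -/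
noncomputable def ret (G : StarGame n) (S : Finset (Fin n)) (i : Fin n) : ℝ :=
  max 0 ((1 + G.α) * ((∑ j ∈ S, G.x j) - G.Z) * (G.x i / ∑ j ∈ S, G.x j))

/-- The utility of a cooperating investor `i` with collateral `c i` when the
set of cooperators is `S` (the collateral is realized when the return falls
below the invested amount). -/
noncomputable def coopUtil (G : StarGame n) (c : Fin n → ℝ) (S : Finset (Fin n))
    (i : Fin n) : ℝ :=
  if G.ret S i ≤ G.x i - c i then c i + G.ret S i
  else if G.ret S i ≤ G.x i then G.x i
  else G.ret S i

/-- The utility of investor `i` under the profile with cooperator set `S`. -/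
noncomputable def utility (G : StarGame n) (c : Fin n → ℝ) (S : Finset (Fin n))
    (i : Fin n) : ℝ :=
  if i ∈ S then G.coopUtil c S i else G.x i

/-- `S` is a Nash equilibrium of the game induced by the collateral vector `c`,
with ties broken towards cooperating: every cooperator weakly prefers
cooperating, and every defector strictly prefers defecting. -/
def NashEq (G : StarGame n) (c : Fin n → ℝ) (S : Finset (Fin n)) : Prop :=
  (∀ i ∈ S, G.x i ≤ G.coopUtil c S i) ∧
    ∀ i ∉ S, G.coopUtil c (insert i S) i < G.x i

/-- A viable collateral vector: nonnegative collaterals for which all-cooperate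
is the unique Nash equilibrium of the induced game. -/
def Viable (G : StarGame n) (c : Fin n → ℝ) : Prop :=
  (∀ i, 0 ≤ c i) ∧ G.NashEq c Finset.univ ∧ ∀ S, G.NashEq c S → S = Finset.univ

/-- The total collateral of a collateral vector. -/
noncomputable def total (c : Fin n → ℝ) : ℝ := ∑ i, c i

/-- An optimal solution of the single-enterprise collateral minimization
problem: a viable collateral vector of minimum total collateral. -/
def Optimal (G : StarGame n) (c : Fin n → ℝ) : Prop :=
  G.Viable c ∧ ∀ c', G.Viable c' → total c ≤ total c'

/-- A minimal collateral vector: viable, and decreasing any single entry by any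
`ε > 0` destroys viability. -/
def Minimal (G : StarGame n) (c : Fin n → ℝ) : Prop :=
  G.Viable c ∧ ∀ (i : Fin n) (ε : ℝ), 0 < ε → ¬ G.Viable (Function.update c i (c i - ε))

/-- The permutation `σ` (listing the players in the order
`σ 1, σ 2, …, σ n`) is an order of iterated elimination of strictly dominated
strategies for the collateral vector `c`, leading to all-cooperate: at every
position `t`, given that the players at earlier positions cooperate, player
`σ t` strictly prefers to cooperate (ties broken towards cooperating) whatever
the remaining players do. -/
def ElimOrder (G : StarGame n) (c : Fin n → ℝ) (σ : Equiv.Perm (Fin n)) : Prop :=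
  ∀ (t : Fin n) (S : Finset (Fin n)), (∀ s, s < t → σ s ∈ S) →
    G.x (σ t) ≤ G.coopUtil c (insert (σ t) S) (σ t)


variable {G : StarGame n} {c : Fin n → ℝ} {S T : Finset (Fin n)} {i : Fin n}

lemma ret_nonneg : 0 ≤ G.ret S i := le_max_left _ _

lemma le_coopUtil_iff :
    (G.x i ≤ G.coopUtil c S i) ↔ G.x i - c i ≤ G.ret S i := by
  unfold coopUtil
  split_ifs with h1 h2 <;> constructor <;> intro h <;> linarith

lemma coopUtil_lt_iff :
    (G.coopUtil c S i < G.x i) ↔ G.ret S i < G.x i - c i := by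
  rw [← not_le, ← not_le, le_coopUtil_iff]

lemma sum_pos_of_mem (hi : i ∈ S) : 0 < ∑ j ∈ S, G.x j :=
  Finset.sum_pos (fun j _ => G.x_pos j) ⟨i, hi⟩

lemma ret_eq (hi : i ∈ S) :
    G.ret S i = G.x i * max 0 ((1 + G.α) * (1 - G.Z / ∑ j ∈ S, G.x j)) := by
  have hX : 0 < ∑ j ∈ S, G.x j := sum_pos_of_mem hi
  have hx := (G.x_pos i).le
  unfold ret
  rw [mul_max_of_nonneg _ _ hx, mul_zero]
  congr 1
  field_simp

lemma ret_lower (hi : i ∈ S) {P : ℝ} (hP : 0 < P) (hPX : P ≤ ∑ j ∈ S, G.x j) :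
    G.x i * max 0 ((1 + G.α) * (1 - G.Z / P)) ≤ G.ret S i := by
  rw [ret_eq hi]
  have hX : 0 < ∑ j ∈ S, G.x j := sum_pos_of_mem hi
  apply mul_le_mul_of_nonneg_left _ (G.x_pos i).le
  apply max_le_max le_rfl
  have : G.Z / (∑ j ∈ S, G.x j) ≤ G.Z / P := div_le_div_of_nonneg_left ?_ ?_ ?_ |>.trans_eq rfl
  · nlinarith [G.α_pos]
  · exact G.Z_nonneg
  · exact hP
  · exact hPX

lemma ret_mono (hi : i ∈ S) (hST : S ⊆ T) : G.ret S i ≤ G.ret T i := by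
  have h1 : (∑ j ∈ S, G.x j) ≤ ∑ j ∈ T, G.x j :=
    Finset.sum_le_sum_of_subset_of_nonneg hST (fun j _ _ => (G.x_pos j).le)
  rw [ret_eq hi]
  exact ret_lower (hST hi) (sum_pos_of_mem hi) h1

lemma nashEq_univ (hc : ∀ i, 0 ≤ c i) : G.NashEq c Finset.univ := by
  constructor
  · intro i _
    rw [le_coopUtil_iff]
    have hX : 0 < ∑ j, G.x j := sum_pos_of_mem (Finset.mem_univ i)
    have h1 : G.x i ≤ (1 + G.α) * ((∑ j, G.x j) - G.Z) * (G.x i / ∑ j, G.x j) := by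
      have h2 : (∑ j, G.x j) * (G.x i / ∑ j, G.x j) ≤
          (1 + G.α) * ((∑ j, G.x j) - G.Z) * (G.x i / ∑ j, G.x j) :=
        mul_le_mul_of_nonneg_right G.profitable (div_nonneg (G.x_pos i).le hX.le)
      have h3 : (∑ j, G.x j) * (G.x i / ∑ j, G.x j) = G.x i := by
        field_simp
      linarith
    have : G.x i ≤ G.ret Finset.univ i := le_trans h1 (le_max_right _ _)
    linarith [hc i]
  · intro i hi
    exact absurd (Finset.mem_univ i) hi

/-- `Good c S L`: the list `L` is an elimination order continuing from the set `S`. -/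
def Good (G : StarGame n) (c : Fin n → ℝ) : Finset (Fin n) → List (Fin n) → Prop
  | _, [] => True
  | S, a :: l => (G.x a - c a ≤ G.ret (insert a S) a) ∧ Good G c (insert a S) l

lemma good_unique : ∀ (L : List (Fin n)) (T : Finset (Fin n)), Good G c T L → T ⊆ S →
    G.NashEq c S → ∀ a ∈ L, a ∈ S := by
  intro L
  induction L with
  | nil => intro T _ _ _ a ha; exact absurd ha List.not_mem_nil
  | cons b l ih =>
    intro T hg hTS hS a ha
    obtain ⟨hb, hgood⟩ := hg
    have hbS : b ∈ S := by
      by_contra hbS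
      have h2 := hS.2 b hbS
      rw [coopUtil_lt_iff] at h2
      have h3 : G.ret (insert b T) b ≤ G.ret (insert b S) b :=
        ret_mono (Finset.mem_insert_self b T) (Finset.insert_subset_insert _ hTS)
      linarith
    rcases List.mem_cons.mp ha with rfl | ha'
    · exact hbS
    · exact ih (insert b T) hgood (Finset.insert_subset hbS hTS) hS a ha'

lemma good_mem_bound : ∀ (L : List (Fin n)) (T : Finset (Fin n)), Good G c T L →
    T ∪ L.toFinset ⊆ S → ∀ a ∈ L, G.x a - c a ≤ G.ret S a := by
  intro L
  induction L with
  | nil => intro T _ _ a ha; exact absurd ha List.not_mem_nil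
  | cons b l ih =>
    intro T hg hsub a ha
    obtain ⟨hb, hgood⟩ := hg
    have hsub' : insert b T ∪ l.toFinset ⊆ S := by
      intro j hj
      apply hsub
      simp only [List.toFinset_cons, Finset.mem_union, Finset.mem_insert] at hj ⊢
      tauto
    rcases List.mem_cons.mp ha with rfl | ha'
    · refine le_trans hb (ret_mono (Finset.mem_insert_self a T) ?_)
      intro j hj
      apply hsub'
      simp only [Finset.mem_union]
      left; exact hj
    · exact ih (insert b T) hgood hsub' a ha'

lemma good_append {a : Fin n} : ∀ (L : List (Fin n)) (T : Finset (Fin n)), Good G c T L →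
    G.x a - c a ≤ G.ret (insert a (T ∪ L.toFinset)) a → Good G c T (L ++ [a]) := by
  intro L
  induction L with
  | nil =>
    intro T _ h
    refine ⟨?_, trivial⟩
    simpa using h
  | cons b l ih =>
    intro T hg h
    obtain ⟨hb, hgood⟩ := hg
    refine ⟨hb, ih (insert b T) hgood ?_⟩
    have : insert b T ∪ l.toFinset = T ∪ (b :: l).toFinset := by
      ext j
      simp only [List.toFinset_cons, Finset.mem_union, Finset.mem_insert]
      tauto
    rwa [this]

lemma exists_good_list (hv : G.Viable c) :
    ∃ L : List (Fin n), L.Nodup ∧ L.toFinset = Finset.univ ∧ Good G c ∅ L := by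
  suffices h : ∀ (k : ℕ) (L : List (Fin n)), L.Nodup → Good G c ∅ L →
      (Finset.univ \ L.toFinset).card = k →
      ∃ L' : List (Fin n), L'.Nodup ∧ L'.toFinset = Finset.univ ∧ Good G c ∅ L' by
    exact h (Finset.univ \ ([] : List (Fin n)).toFinset).card [] List.nodup_nil trivial rfl
  intro k
  induction k with
  | zero =>
    intro L hnd hg hcard
    refine ⟨L, hnd, ?_, hg⟩
    have h0 := Finset.card_eq_zero.mp hcard
    have h2 : Finset.univ ⊆ L.toFinset := by
      intro j hj
      by_contra hj'
      have hmem : j ∈ Finset.univ \ L.toFinset := Finset.mem_sdiff.mpr ⟨hj, hj'⟩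
      rw [h0] at hmem
      exact absurd hmem (Finset.notMem_empty j)
    exact Finset.eq_univ_of_forall (fun j => h2 (Finset.mem_univ j))
  | succ k ih =>
    intro L hnd hg hcard
    set S := L.toFinset with hSdef
    have hSne : S ≠ Finset.univ := by
      intro h
      rw [h, Finset.sdiff_self] at hcard
      simp at hcard
    -- there is an extension
    have hext : ∃ a ∉ S, G.x a - c a ≤ G.ret (insert a S) a := by
      by_contra hno
      push_neg at hno
      have hne : G.NashEq c S := by
        constructor
        · intro i hi
          rw [le_coopUtil_iff]
          refine good_mem_bound L ∅ hg ?_ i (List.mem_toFinset.mp hi)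
          simp [hSdef]
        · intro i hi
          rw [coopUtil_lt_iff]
          exact hno i hi
      exact hSne (hv.2.2 S hne)
    obtain ⟨a, haS, ha⟩ := hext
    have hnd' : (L ++ [a]).Nodup := by
      rw [List.nodup_append]
      exact ⟨hnd, List.nodup_singleton a, by
        intro b hb
        simp only [List.mem_singleton]
        intro h hh; subst hh; intro hba; subst hba
        exact haS (List.mem_toFinset.mpr hb)⟩
    have hg' : Good G c ∅ (L ++ [a]) := by
      apply good_append L ∅ hg
      have : (∅ : Finset (Fin n)) ∪ L.toFinset = S := by simp [hSdef]
      rwa [this]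
    refine ih (L ++ [a]) hnd' hg' ?_
    have : (L ++ [a]).toFinset = insert a S := by
      simp [hSdef, List.toFinset_append]
    rw [this, Finset.sdiff_insert,
      Finset.card_erase_of_mem (Finset.mem_sdiff.mpr ⟨Finset.mem_univ a, haS⟩), hcard]
    omega



lemma good_min : ∀ (L : List (Fin n)) (S : Finset (Fin n)), Good G c S L →
    Good G (fun i => min (c i) (G.x i)) S L := by
  intro L
  induction L with
  | nil => intro S _; trivial
  | cons a l ih =>
    intro S hg
    refine ⟨?_, ih _ hg.2⟩
    show G.x a - min (c a) (G.x a) ≤ G.ret (insert a S) a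
    have hr : (0:ℝ) ≤ G.ret (insert a S) a := ret_nonneg
    rcases min_cases (c a) (G.x a) with ⟨h1, _⟩ | ⟨h1, _⟩ <;> rw [h1]
    · exact hg.1
    · linarith

lemma viable_min (hv : G.Viable c) : G.Viable (fun i => min (c i) (G.x i)) := by
  obtain ⟨L, hnd, hLu, hg⟩ := exists_good_list hv
  refine ⟨fun i => le_min (hv.1 i) (G.x_pos i).le, nashEq_univ (fun i => le_min (hv.1 i) (G.x_pos i).le), ?_⟩
  intro S hS
  apply Finset.eq_univ_of_forall
  intro a
  exact good_unique L ∅ (good_min L ∅ hg) (Finset.empty_subset S) hS a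
    (by rw [← List.mem_toFinset, hLu]; exact Finset.mem_univ a)

lemma opt_le_x {c₀ : Fin n → ℝ} (h₀ : G.Optimal c₀) : ∀ i, c₀ i ≤ G.x i := by
  intro i
  by_contra h
  push_neg at h
  have hle : total c₀ ≤ total (fun i => min (c₀ i) (G.x i)) :=
    h₀.2 _ (viable_min h₀.1)
  have hlt : total (fun i => min (c₀ i) (G.x i)) < total c₀ := by
    apply Finset.sum_lt_sum
    · intro j _; exact min_le_left _ _
    · exact ⟨i, Finset.mem_univ i, by simp [min_eq_right h.le]; exact h⟩
  linarith

/-- The marginal-collateral factor. -/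
noncomputable def expr (G : StarGame n) (P : ℝ) : ℝ := (1 + G.α) * (G.Z / P) - G.α

noncomputable def psi (G : StarGame n) (P : ℝ) : ℝ := max 0 (G.expr P)

lemma psi_nonneg {P : ℝ} : 0 ≤ G.psi P := le_max_left _ _

lemma expr_anti {P Q : ℝ} (h0 : 0 < P) (h : P ≤ Q) : G.expr Q ≤ G.expr P := by
  unfold expr
  have h1 : G.Z / Q ≤ G.Z / P := div_le_div_of_nonneg_left G.Z_nonneg h0 h
  nlinarith [G.α_pos]

lemma psi_anti {P Q : ℝ} (h0 : 0 < P) (h : P ≤ Q) : G.psi Q ≤ G.psi P :=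
  max_le_max le_rfl (expr_anti h0 h)

lemma swap_core {X a b : ℝ} (hX : 0 ≤ X) (ha : 0 < a) (hab : a ≤ b) :
    b * G.psi (X + b) + a * G.psi (X + a + b) ≤
      a * G.psi (X + a) + b * G.psi (X + a + b) := by
  have hb : 0 < b := lt_of_lt_of_le ha hab
  have hpa : 0 < X + a := by linarith
  have hpb : 0 < X + b := by linarith
  have hpt : 0 < X + a + b := by linarith
  have hα := G.α_pos
  have hZ := G.Z_nonneg
  have hK : 0 ≤ (1 + G.α) * G.Z := by nlinarith
  have heb : G.expr (X + b) = (1 + G.α) * G.Z / (X + b) - G.α := by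
    unfold expr; rw [mul_div_assoc]
  have hea : G.expr (X + a) = (1 + G.α) * G.Z / (X + a) - G.α := by
    unfold expr; rw [mul_div_assoc]
  have het : G.expr (X + a + b) = (1 + G.α) * G.Z / (X + a + b) - G.α := by
    unfold expr; rw [mul_div_assoc]
  set K := (1 + G.α) * G.Z with hKdef
  rcases le_or_gt (G.expr (X + b)) 0 with h1 | h1
  · -- psi (X+b) = 0, psi (X+a+b) = 0
    have h2 : G.expr (X + a + b) ≤ 0 := le_trans (expr_anti hpb (by linarith)) h1
    have e1 : G.psi (X + b) = 0 := max_eq_left h1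
    have e2 : G.psi (X + a + b) = 0 := max_eq_left h2
    rw [e1, e2]
    have := @psi_nonneg n G (X + a)
    nlinarith
  · rcases le_or_gt (G.expr (X + a + b)) 0 with h2 | h2
    · -- middle case
      have e2 : G.psi (X + a + b) = 0 := max_eq_left h2
      have e1 : G.psi (X + b) = G.expr (X + b) := max_eq_right h1.le
      rw [e1, e2, mul_zero, mul_zero, add_zero, add_zero]
      have hea' : G.expr (X + a) ≤ G.psi (X + a) := le_max_right _ _
      have hgoal : b * G.expr (X + b) ≤ a * G.expr (X + a) := by
        -- from expr (X+a+b) ≤ 0 : K ≤ α (X+a+b)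
        have hKle : K ≤ G.α * (X + a + b) := by
          rw [het] at h2
          have := (div_le_iff₀ hpt).mp (by linarith : K / (X + a + b) ≤ G.α)
          linarith
        have hKX : K * X ≤ G.α * ((X + a) * (X + b)) := by
          nlinarith [mul_le_mul_of_nonneg_right hKle hX, mul_pos ha hb]
        rw [heb, hea, ← sub_nonneg]
        have hrw : a * (K / (X + a) - G.α) - b * (K / (X + b) - G.α) =
            (b - a) * (G.α * ((X + a) * (X + b)) - K * X) / ((X + a) * (X + b)) := by
          field_simp
          ring
        rw [hrw]
        exact div_nonneg (mul_nonneg (by linarith) (by linarith)) (by positivity)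
      have := mul_le_mul_of_nonneg_left hea' ha.le
      nlinarith
    · -- all three positive
      have h3 : 0 < G.expr (X + a) :=
        lt_of_lt_of_le h2 (expr_anti hpa (by linarith))
      have h4 : 0 < G.expr (X + b) :=
        lt_of_lt_of_le h2 (expr_anti hpb (by linarith))
      have e1 : G.psi (X + b) = G.expr (X + b) := max_eq_right h4.le
      have e2 : G.psi (X + a + b) = G.expr (X + a + b) := max_eq_right h2.le
      have e3 : G.psi (X + a) = G.expr (X + a) := max_eq_right h3.le
      rw [e1, e2, e3, heb, hea, het]
      have key : b * (K / (X + b)) + a * (K / (X + a + b)) ≤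
          a * (K / (X + a)) + b * (K / (X + a + b)) := by
        rw [← sub_nonneg]
        have hrw : a * (K / (X + a)) + b * (K / (X + a + b)) -
            (b * (K / (X + b)) + a * (K / (X + a + b))) =
            K * (b - a) * (a * b) / ((X + a) * ((X + b) * (X + a + b))) := by
          field_simp
          ring
        rw [hrw]
        apply div_nonneg
        · exact mul_nonneg (mul_nonneg hK (by linarith)) (by positivity)
        · positivity
      nlinarith [key]

noncomputable def cost (G : StarGame n) : ℝ → List ℝ → ℝ
  | _, [] => 0
  | X, y :: l => y * G.psi (X + y) + cost G (X + y) l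

lemma cost_swap {X a b : ℝ} (l : List ℝ) (hX : 0 ≤ X) (ha : 0 < a) (hab : a ≤ b) :
    G.cost X (b :: a :: l) ≤ G.cost X (a :: b :: l) := by
  show b * G.psi (X + b) + (a * G.psi (X + b + a) + G.cost (X + b + a) l) ≤
    a * G.psi (X + a) + (b * G.psi (X + a + b) + G.cost (X + a + b) l)
  have h1 : X + b + a = X + a + b := by ring
  rw [h1]
  have := swap_core (G := G) hX ha hab
  linarith

lemma cost_move_front : ∀ (l₁ : List ℝ) {l₂ : List ℝ} {X b : ℝ}, 0 ≤ X → 0 < b →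
    (∀ a ∈ l₁, 0 < a ∧ a ≤ b) →
    G.cost X (b :: (l₁ ++ l₂)) ≤ G.cost X (l₁ ++ b :: l₂) := by
  intro l₁
  induction l₁ with
  | nil => intro l₂ X b _ _ _; exact le_refl _
  | cons a t ih =>
    intro l₂ X b hX hb hl
    have haa := hl a (List.mem_cons_self)
    calc G.cost X (b :: (a :: t ++ l₂)) ≤ G.cost X (a :: b :: (t ++ l₂)) :=
          cost_swap _ hX haa.1 haa.2
      _ = a * G.psi (X + a) + G.cost (X + a) (b :: (t ++ l₂)) := rfl
      _ ≤ a * G.psi (X + a) + G.cost (X + a) (t ++ b :: l₂) := by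
          have := ih (l₂ := l₂) (X := X + a) (b := b) (by linarith [haa.1]) hb
            (fun y hy => hl y (List.mem_cons_of_mem a hy))
          linarith
      _ = G.cost X (a :: t ++ b :: l₂) := rfl

lemma cost_sorted_min : ∀ (s l : List ℝ) (X : ℝ), 0 ≤ X → (∀ y ∈ s, 0 < y) →
    s.Pairwise (fun u v => v ≤ u) → l.Perm s → G.cost X s ≤ G.cost X l := by
  intro s
  induction s with
  | nil =>
    intro l X _ _ _ hp
    rw [List.perm_nil.mp hp]
  | cons y s' ih =>
    intro l X hX hpos hsort hp
    have hy : y ∈ l := hp.mem_iff.mpr (List.mem_cons_self)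
    obtain ⟨l₁, l₂, rfl⟩ := List.append_of_mem hy
    have hmid : (l₁ ++ y :: l₂).Perm (y :: (l₁ ++ l₂)) := List.perm_middle
    have hperm' : (l₁ ++ l₂).Perm s' := by
      have := (hmid.symm.trans hp)
      exact this.cons_inv
    have hle1 : G.cost X (y :: (l₁ ++ l₂)) ≤ G.cost X (l₁ ++ y :: l₂) := by
      apply cost_move_front l₁ hX (hpos y (List.mem_cons_self))
      intro a ha
      have hal : a ∈ l₁ ++ y :: l₂ := List.mem_append_left _ ha
      have has : a ∈ y :: s' := hp.subset hal
      constructor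
      · exact hpos a has
      · rcases List.mem_cons.mp has with rfl | h
        · exact le_refl a
        · exact List.rel_of_pairwise_cons hsort h
    have hle2 : G.cost (X + y) s' ≤ G.cost (X + y) (l₁ ++ l₂) := by
      apply ih (l₁ ++ l₂) (X + y) (by linarith [hpos y (List.mem_cons_self)])
        (fun z hz => hpos z (List.mem_cons_of_mem y hz)) hsort.of_cons hperm'
    calc G.cost X (y :: s') = y * G.psi (X + y) + G.cost (X + y) s' := rfl
      _ ≤ y * G.psi (X + y) + G.cost (X + y) (l₁ ++ l₂) := by linarith
      _ = G.cost X (y :: (l₁ ++ l₂)) := rfl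
      _ ≤ G.cost X (l₁ ++ y :: l₂) := hle1

lemma one_sub_expr {P : ℝ} : (1 + G.α) * (1 - G.Z / P) = 1 - G.expr P := by
  unfold expr
  ring

lemma step_bound {c : Fin n → ℝ} {S : Finset (Fin n)} {a : Fin n}
    (hnn : 0 ≤ c a) (hlt : c a < G.x a)
    (hg : G.x a - c a ≤ G.ret (insert a S) a) {P : ℝ}
    (hP : (∑ j ∈ insert a S, G.x j) ≤ P) : G.x a * G.psi P ≤ c a := by
  have hmem : a ∈ insert a S := Finset.mem_insert_self a S
  have hX : 0 < ∑ j ∈ insert a S, G.x j := sum_pos_of_mem hmem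
  rw [ret_eq hmem, one_sub_expr] at hg
  have hxa := G.x_pos a
  have hmax : 0 < max 0 (1 - G.expr (∑ j ∈ insert a S, G.x j)) := by
    by_contra hm
    push_neg at hm
    have : max 0 (1 - G.expr (∑ j ∈ insert a S, G.x j)) = 0 :=
      le_antisymm hm (le_max_left _ _)
    rw [this, mul_zero] at hg
    linarith
  have hmax' : max 0 (1 - G.expr (∑ j ∈ insert a S, G.x j)) =
      1 - G.expr (∑ j ∈ insert a S, G.x j) := by
    rcases max_cases (0:ℝ) (1 - G.expr (∑ j ∈ insert a S, G.x j)) with ⟨h, _⟩ | ⟨h, _⟩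
    · rw [h] at hmax; linarith
    · exact h
  rw [hmax'] at hg
  have h1 : G.x a * G.expr (∑ j ∈ insert a S, G.x j) ≤ c a := by nlinarith
  have h2 : G.expr P ≤ G.expr (∑ j ∈ insert a S, G.x j) := expr_anti hX hP
  unfold psi
  rcases max_cases (0:ℝ) (G.expr P) with ⟨h, _⟩ | ⟨h, _⟩ <;> rw [h]
  · simpa using hnn
  · nlinarith

lemma costle {c : Fin n → ℝ} {A : Finset (Fin n)} (hnn : ∀ i, 0 ≤ c i)
    (hlt : ∀ i, i ∉ A → c i < G.x i) :
    ∀ (L : List (Fin n)) (S : Finset (Fin n)), L.Nodup → (∀ b ∈ L, b ∉ S) →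
    Good G c S L →
    G.cost ((∑ j ∈ A, G.x j) + ∑ j ∈ S.filter (fun j => j ∉ A), G.x j)
        ((L.filter (fun a => decide (a ∉ A))).map G.x) ≤
      ((L.filter (fun a => decide (a ∉ A))).map c).sum := by
  intro L
  induction L with
  | nil => intro S _ _ _; simp [cost]
  | cons a L' ih =>
    intro S hnd hdisj hg
    obtain ⟨hga, hg'⟩ := hg
    have haS : a ∉ S := hdisj a (List.mem_cons_self)
    have hdisj' : ∀ b ∈ L', b ∉ insert a S := by
      intro b hb
      rw [Finset.mem_insert]
      push_neg
      exact ⟨fun h => (List.nodup_cons.mp hnd).1 (h ▸ hb), hdisj b (List.mem_cons_of_mem a hb)⟩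
    have ihS := ih (insert a S) (List.nodup_cons.mp hnd).2 hdisj' hg'
    by_cases haA : a ∈ A
    · rw [List.filter_cons_of_neg (by simp [haA])]
      have hfe : (insert a S).filter (fun j => j ∉ A) = S.filter (fun j => j ∉ A) := by
        ext j
        simp only [Finset.mem_filter, Finset.mem_insert]
        constructor
        · rintro ⟨rfl | h, h2⟩
          · exact absurd haA h2
          · exact ⟨h, h2⟩
        · tauto
      rwa [hfe] at ihS
    · rw [List.filter_cons_of_pos (by simp [haA])]
      have hfe : (insert a S).filter (fun j => j ∉ A) = insert a (S.filter (fun j => j ∉ A)) := by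
        ext j
        simp only [Finset.mem_filter, Finset.mem_insert]
        constructor
        · rintro ⟨h1, h2⟩; tauto
        · rintro (rfl | ⟨h1, h2⟩)
          · exact ⟨Or.inl rfl, haA⟩
          · exact ⟨Or.inr h1, h2⟩
      have hsum : ∑ j ∈ (insert a S).filter (fun j => j ∉ A), G.x j =
          G.x a + ∑ j ∈ S.filter (fun j => j ∉ A), G.x j := by
        rw [hfe, Finset.sum_insert (by simp [haS])]
      rw [List.map_cons, List.map_cons, List.sum_cons]
      show G.x a * G.psi (_ + G.x a) + G.cost _ _ ≤ _
      have hacc : (∑ j ∈ A, G.x j) + ∑ j ∈ S.filter (fun j => j ∉ A), G.x j + G.x a =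
          (∑ j ∈ A, G.x j) + ∑ j ∈ (insert a S).filter (fun j => j ∉ A), G.x j := by
        rw [hsum]; ring
      have hhead : G.x a * G.psi ((∑ j ∈ A, G.x j) + ∑ j ∈ S.filter (fun j => j ∉ A), G.x j + G.x a) ≤ c a := by
        apply step_bound (hnn a) (hlt a haA) hga
        have hsplit : ∑ j ∈ insert a S, G.x j =
            (∑ j ∈ (insert a S).filter (fun j => j ∈ A), G.x j) +
            ∑ j ∈ (insert a S).filter (fun j => j ∉ A), G.x j :=
          (Finset.sum_filter_add_sum_filter_not _ _ _).symm
        have hsub : (∑ j ∈ (insert a S).filter (fun j => j ∈ A), G.x j) ≤ ∑ j ∈ A, G.x j := by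
          apply Finset.sum_le_sum_of_subset_of_nonneg
          · intro j hj; exact (Finset.mem_filter.mp hj).2
          · exact fun j _ _ => (G.x_pos j).le
        rw [hsplit, hsum]
        linarith
      rw [hacc] at *
      linarith

lemma sum_eq_cost : ∀ (l : List (Fin n)) (X : ℝ), l.Pairwise (· < ·) →
    (∑ i ∈ l.toFinset, G.x i * G.psi (X + ∑ j ∈ l.toFinset.filter (fun j => j ≤ i), G.x j)) =
      G.cost X (l.map G.x) := by
  intro l
  induction l with
  | nil => intro X _; simp [cost]
  | cons a t ih =>
    intro X hs
    have hrel : ∀ b ∈ t, a < b := fun b hb => List.rel_of_pairwise_cons hs hb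
    have hat : a ∉ t.toFinset := by
      rw [List.mem_toFinset]
      intro h
      exact lt_irrefl a (hrel a h)
    rw [List.toFinset_cons, Finset.sum_insert hat]
    have hfa : (insert a t.toFinset).filter (fun j => j ≤ a) = {a} := by
      ext j
      simp only [Finset.mem_filter, Finset.mem_insert, Finset.mem_singleton]
      constructor
      · rintro ⟨rfl | h, h2⟩
        · rfl
        · exact absurd h2 (not_le.mpr (hrel j (List.mem_toFinset.mp h)))
      · rintro rfl; exact ⟨Or.inl rfl, le_refl _⟩
    have hterm : ∀ i ∈ t.toFinset,
        G.x i * G.psi (X + ∑ j ∈ (insert a t.toFinset).filter (fun j => j ≤ i), G.x j) =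
        G.x i * G.psi ((X + G.x a) + ∑ j ∈ t.toFinset.filter (fun j => j ≤ i), G.x j) := by
      intro i hi
      have hfi : (insert a t.toFinset).filter (fun j => j ≤ i) =
          insert a (t.toFinset.filter (fun j => j ≤ i)) := by
        ext j
        simp only [Finset.mem_filter, Finset.mem_insert]
        constructor
        · rintro ⟨rfl | h, h2⟩
          · exact Or.inl rfl
          · exact Or.inr ⟨h, h2⟩
        · rintro (rfl | ⟨h1, h2⟩)
          · exact ⟨Or.inl rfl, (hrel i (List.mem_toFinset.mp hi)).le⟩
          · exact ⟨Or.inr h1, h2⟩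
      have hanotf : a ∉ t.toFinset.filter (fun j => j ≤ i) := by
        intro h
        exact hat (Finset.mem_filter.mp h).1
      rw [hfi, Finset.sum_insert hanotf]
      ring_nf
    rw [Finset.sum_congr rfl hterm, ih (X + G.x a) hs.of_cons, hfa]
    simp only [Finset.sum_singleton, List.map_cons]
    rfl

lemma viable_ours (A : Finset (Fin n)) :
    G.Viable (fun i => if i ∈ A then G.x i else
      G.x i * G.psi ((∑ j ∈ A, G.x j) + ∑ j ∈ Aᶜ.filter (fun j => j ≤ i), G.x j)) := by
  set c : Fin n → ℝ := fun i => if i ∈ A then G.x i else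
      G.x i * G.psi ((∑ j ∈ A, G.x j) + ∑ j ∈ Aᶜ.filter (fun j => j ≤ i), G.x j) with hc
  have hnn : ∀ i, 0 ≤ c i := by
    intro i
    rw [hc]
    dsimp only
    split_ifs
    · exact (G.x_pos i).le
    · exact mul_nonneg (G.x_pos i).le psi_nonneg
  refine ⟨hnn, nashEq_univ hnn, ?_⟩
  intro S hS
  have hAS : ∀ a ∈ A, a ∈ S := by
    intro a haA
    by_contra haS
    have h2 := (coopUtil_lt_iff).mp (hS.2 a haS)
    have hca : c a = G.x a := by rw [hc]; simp [haA]
    rw [hca] at h2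
    have := ret_nonneg (G := G) (S := insert a S) (i := a)
    linarith
  by_contra hSne
  have hne : (Sᶜ : Finset (Fin n)).Nonempty := by
    rw [Finset.nonempty_iff_ne_empty]
    intro h
    exact hSne (by rwa [← Finset.compl_eq_empty_iff])
  set i := Sᶜ.min' hne with hidef
  have hiS : i ∉ S := by
    have := Finset.min'_mem Sᶜ hne
    rwa [Finset.mem_compl] at this
  have hiB : i ∉ A := fun h => hiS (hAS i h)
  set P := (∑ j ∈ A, G.x j) + ∑ j ∈ Aᶜ.filter (fun j => j ≤ i), G.x j with hPdef
  have hdisj : Disjoint A (Aᶜ.filter (fun j => j ≤ i)) := by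
    apply Finset.disjoint_left.mpr
    intro j hj hj'
    exact (Finset.mem_compl.mp (Finset.mem_filter.mp hj').1) hj
  have hPu : P = ∑ j ∈ A ∪ Aᶜ.filter (fun j => j ≤ i), G.x j := by
    rw [Finset.sum_union hdisj]
  have hsub : A ∪ Aᶜ.filter (fun j => j ≤ i) ⊆ insert i S := by
    intro j hj
    rcases Finset.mem_union.mp hj with hjA | hjf
    · exact Finset.mem_insert_of_mem (hAS j hjA)
    · obtain ⟨_, hji⟩ := Finset.mem_filter.mp hjf
      rcases eq_or_lt_of_le hji with rfl | hlt
      · exact Finset.mem_insert_self _ _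
      · apply Finset.mem_insert_of_mem
        by_contra hjS
        have : i ≤ j := Finset.min'_le Sᶜ j (Finset.mem_compl.mpr hjS)
        exact absurd hlt (not_lt.mpr this)
  have hP0 : 0 < P := by
    rw [hPu]
    apply Finset.sum_pos (fun j _ => G.x_pos j)
    exact ⟨i, Finset.mem_union_right _ (Finset.mem_filter.mpr
      ⟨Finset.mem_compl.mpr hiB, le_refl i⟩)⟩
  have hPle : P ≤ ∑ j ∈ insert i S, G.x j := by
    rw [hPu]
    exact Finset.sum_le_sum_of_subset_of_nonneg hsub (fun j _ _ => (G.x_pos j).le)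
  have hlow : G.x i * max 0 ((1 + G.α) * (1 - G.Z / P)) ≤ G.ret (insert i S) i :=
    ret_lower (Finset.mem_insert_self i S) hP0 hPle
  have h2 := (coopUtil_lt_iff).mp (hS.2 i hiS)
  have hci : c i = G.x i * G.psi P := by rw [hc]; simp [hiB, hPdef]
  have hkey : G.x i - c i ≤ G.x i * max 0 ((1 + G.α) * (1 - G.Z / P)) := by
    rw [hci, one_sub_expr]
    have hxi := (G.x_pos i).le
    have h3 : 1 - G.psi P ≤ max 0 (1 - G.expr P) := by
      unfold psi
      rcases le_or_gt (G.expr P) 0 with h | h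
      · rw [max_eq_left h]
        calc (1:ℝ) - 0 = 1 := by ring
          _ ≤ 1 - G.expr P := by linarith
          _ ≤ max 0 (1 - G.expr P) := le_max_right _ _
      · rw [max_eq_right h.le]
        exact le_max_right _ _
    have h4 := mul_le_mul_of_nonneg_left h3 hxi
    nlinarith [h4]
  linarith

end StarGame

theorem optimal_partial_collaterals {n : ℕ} (G : StarGame n)
    (hsorted : ∀ i j : Fin n, i ≤ j → G.x j ≤ G.x i)
    (c₀ : Fin n → ℝ) (h₀ : G.Optimal c₀)
    (A : Finset (Fin n)) (hA : ∀ i, i ∈ A ↔ c₀ i = G.x i) :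
    ∃ c : Fin n → ℝ, G.Optimal c ∧ (∀ i ∈ A, c i = G.x i) ∧
      ∀ i ∈ Aᶜ, c i =
        max 0 (G.x i * (1 - (1 + G.α) *
          (1 - G.Z / ((∑ j ∈ A, G.x j) + ∑ j ∈ Aᶜ.filter (fun j => j ≤ i), G.x j)))) := by
  classical
  set c : Fin n → ℝ := fun i => if i ∈ A then G.x i else
      G.x i * G.psi ((∑ j ∈ A, G.x j) + ∑ j ∈ Aᶜ.filter (fun j => j ≤ i), G.x j) with hc
  have hviable : G.Viable c := StarGame.viable_ours A
  -- total c ≤ total c₀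
  have hc0nn := h₀.1.1
  have hc0lt : ∀ i, i ∉ A → c₀ i < G.x i := fun i hiA =>
    lt_of_le_of_ne (StarGame.opt_le_x h₀ i) (fun h => hiA ((hA i).mpr h))
  obtain ⟨L, hnd, hLu, hg⟩ := StarGame.exists_good_list h₀.1
  have hcostle := StarGame.costle hc0nn hc0lt L ∅ hnd (fun b _ => Finset.notMem_empty b) hg
  rw [Finset.filter_empty, Finset.sum_empty, add_zero] at hcostle
  set p : Fin n → Bool := fun a => decide (a ∉ A) with hp
  set sB : List (Fin n) := Aᶜ.sort (· ≤ ·) with hsB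
  have hfilt_nodup : (L.filter p).Nodup := hnd.filter p
  have hfilt_toF : (L.filter p).toFinset = Aᶜ := by
    ext j
    have hjL : j ∈ L := by
      rw [← List.mem_toFinset, hLu]; exact Finset.mem_univ j
    simp [List.mem_toFinset, List.mem_filter, hjL, hp]
  have hsB_nodup : sB.Nodup := Finset.sort_nodup _ _
  have hsB_toF : sB.toFinset = Aᶜ := Finset.sort_toFinset _ _
  have hperm : (L.filter p).Perm sB :=
    List.perm_of_nodup_nodup_toFinset_eq hfilt_nodup hsB_nodup (by rw [hfilt_toF, hsB_toF])
  have hsorted_sB : (sB.map G.x).Pairwise (fun u v => v ≤ u) := by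
    have h1 : sB.Pairwise (· ≤ ·) := Finset.pairwise_sort _ _
    exact List.Pairwise.map G.x (fun a b hab => (hsorted a b hab : (fun u v : ℝ => v ≤ u) (G.x a) (G.x b))) h1
  have hpos : ∀ y ∈ sB.map G.x, 0 < y := by
    intro y hy
    obtain ⟨i, _, rfl⟩ := List.mem_map.mp hy
    exact G.x_pos i
  have hXAnn : 0 ≤ ∑ j ∈ A, G.x j := Finset.sum_nonneg (fun j _ => (G.x_pos j).le)
  have hmin := StarGame.cost_sorted_min (G := G) (sB.map G.x) ((L.filter p).map G.x)
    (∑ j ∈ A, G.x j) hXAnn hpos hsorted_sB (hperm.map G.x)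
  have hsum_eq := StarGame.sum_eq_cost (G := G) sB (∑ j ∈ A, G.x j)
    (Finset.sortedLT_sort _).pairwise
  rw [hsB_toF] at hsum_eq
  have hlist_sum : ((L.filter p).map c₀).sum = ∑ i ∈ Aᶜ, c₀ i := by
    rw [← hfilt_toF]
    exact (List.sum_toFinset c₀ hfilt_nodup).symm
  have htotc : StarGame.total c = (∑ j ∈ A, G.x j) +
      ∑ i ∈ Aᶜ, G.x i * G.psi ((∑ j ∈ A, G.x j) + ∑ j ∈ Aᶜ.filter (fun j => j ≤ i), G.x j) := by
    rw [StarGame.total, ← Finset.sum_add_sum_compl A c]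
    congr 1
    · apply Finset.sum_congr rfl
      intro i hi
      rw [hc]; simp [hi]
    · apply Finset.sum_congr rfl
      intro i hi
      rw [hc]; simp [Finset.mem_compl.mp hi]
  have htotc0 : StarGame.total c₀ = (∑ j ∈ A, G.x j) + ∑ i ∈ Aᶜ, c₀ i := by
    rw [StarGame.total, ← Finset.sum_add_sum_compl A c₀]
    congr 1
    exact Finset.sum_congr rfl (fun i hi => (hA i).mp hi)
  have htot : StarGame.total c ≤ StarGame.total c₀ := by
    rw [htotc, htotc0, hsum_eq]
    have := le_trans hmin (le_trans hcostle (le_of_eq hlist_sum))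
    linarith
  refine ⟨c, ⟨hviable, fun c' hv => le_trans htot (h₀.2 c' hv)⟩, ?_, ?_⟩
  · intro i hi
    rw [hc]; simp [hi]
  · intro i hi
    have hiA := Finset.mem_compl.mp hi
    rw [hc]
    simp only [hiA, if_false]
    rw [StarGame.psi, mul_max_of_nonneg _ _ (G.x_pos i).le, mul_zero]
    have hex : (1 - (1 + G.α) *
        (1 - G.Z / ((∑ j ∈ A, G.x j) + ∑ j ∈ Aᶜ.filter (fun j => j ≤ i), G.x j))) =
        G.expr ((∑ j ∈ A, G.x j) + ∑ j ∈ Aᶜ.filter (fun j => j ≤ i), G.x j) := by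
      have := StarGame.one_sub_expr (G := G)
        (P := (∑ j ∈ A, G.x j) + ∑ j ∈ Aᶜ.filter (fun j => j ≤ i), G.x j)
      linarith
    rw [hex]
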